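/- Define F : ℝ³ → ℝ³ by F(θ₁, θ₂, s) = (θ₁ − θ₂, θ₂, e^s − 1). Let γ be the 1-form γ_{(θ₁, θ₂, s)}(u₁, u₂, u₃) = u₁ − e^s u₂ (i.e. dθ₁ − e^s dθ₂, the contact product form of (S¹, dθ)) and let β be the 1-form β_{(z, x, y)}(w₁, w₂, w₃) = w₁ − y·w₂ (i.e. dz − y dx on S¹ × T^*S¹ in coordinates (z, x, y)). Then: (i) β_{F(p)}(DF_p(u)) = γ_p(u) for all points p and vectors u, i.e. F^*β = γ; (ii) F is injective with image ℝ × ℝ × (−1, ∞); and (iii) F(θ, θ, 0) = (0, θ, 0) for all θ, so F maps the diagonal {(θ, θ, 0)} onto the zero section {(0, x, 0) : x ∈ ℝ}. (This is the contactomorphism used to prove that (S¹, ξ_std) is strongly orderable.) -/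

import Mathlib

/- The contact product of `(S¹, dθ)` is `S¹ × S¹ × ℝ` with contact form `dθ₁ − e^s dθ₂` and
diagonal `Δ = {(θ, θ, 0)}`; the space `S¹ × T^*S¹` carries coordinates `(z, x, y)`, the contact
form `dz − y dx` and zero section `{z = 0, y = 0}`.  All maps and forms are written on the
universal covers, i.e. on ℝ³. -/

/-- The contact product form `dθ₁ − e^s dθ₂` of `(S¹, dθ)`, at the point `(θ₁, θ₂, s)` on the
vector `(u₁, u₂, u₃)`. -/
noncomputable def gammaForm (p u : ℝ × ℝ × ℝ) : ℝ :=
  u.1 - Real.exp p.2.2 * u.2.1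

/-- The contact form `dz − y dx` on `S¹ × T^*S¹` in coordinates `(z, x, y)`, at the point
`(z, x, y)` on the vector `(w₁, w₂, w₃)`. -/
def betaForm (q w : ℝ × ℝ × ℝ) : ℝ :=
  w.1 - q.2.2 * w.2.1

theorem hasFDerivF (p : ℝ × ℝ × ℝ) :
    HasFDerivAt (fun q : ℝ × ℝ × ℝ => ((q.1 - q.2.1, q.2.1, Real.exp q.2.2 - 1) : ℝ × ℝ × ℝ))
      (((ContinuousLinearMap.fst ℝ ℝ (ℝ × ℝ)) -
          (ContinuousLinearMap.fst ℝ ℝ ℝ).comp (ContinuousLinearMap.snd ℝ ℝ (ℝ × ℝ))).prod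
        (((ContinuousLinearMap.fst ℝ ℝ ℝ).comp (ContinuousLinearMap.snd ℝ ℝ (ℝ × ℝ))).prod
          (Real.exp p.2.2 • ((ContinuousLinearMap.snd ℝ ℝ ℝ).comp
            (ContinuousLinearMap.snd ℝ ℝ (ℝ × ℝ)))))) p := by
  have h1 : HasFDerivAt (fun q : ℝ × ℝ × ℝ => q.1 - q.2.1)
      ((ContinuousLinearMap.fst ℝ ℝ (ℝ × ℝ)) -
        (ContinuousLinearMap.fst ℝ ℝ ℝ).comp (ContinuousLinearMap.snd ℝ ℝ (ℝ × ℝ))) p :=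
    (hasFDerivAt_fst).sub ((hasFDerivAt_fst).comp p (hasFDerivAt_snd))
  have h2 : HasFDerivAt (fun q : ℝ × ℝ × ℝ => q.2.1)
      ((ContinuousLinearMap.fst ℝ ℝ ℝ).comp (ContinuousLinearMap.snd ℝ ℝ (ℝ × ℝ))) p :=
    (hasFDerivAt_fst).comp p (hasFDerivAt_snd)
  have h3 : HasFDerivAt (fun q : ℝ × ℝ × ℝ => Real.exp q.2.2 - 1)
      (Real.exp p.2.2 • ((ContinuousLinearMap.snd ℝ ℝ ℝ).comp
        (ContinuousLinearMap.snd ℝ ℝ (ℝ × ℝ)))) p := by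
    exact (((hasFDerivAt_snd).comp p (hasFDerivAt_snd)).exp).sub_const 1
  exact HasFDerivAt.prodMk h1 (HasFDerivAt.prodMk h2 h3)

theorem contactomorphism_from_contact_product_of_circle_to_jet_space :
    (∀ (p u : ℝ × ℝ × ℝ),
      betaForm (p.1 - p.2.1, p.2.1, Real.exp p.2.2 - 1)
        (fderiv ℝ (fun q : ℝ × ℝ × ℝ => ((q.1 - q.2.1, q.2.1, Real.exp q.2.2 - 1) : ℝ × ℝ × ℝ))
          p u) = gammaForm p u) ∧
    Function.Injective
      (fun p : ℝ × ℝ × ℝ => ((p.1 - p.2.1, p.2.1, Real.exp p.2.2 - 1) : ℝ × ℝ × ℝ)) ∧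
    Set.range (fun p : ℝ × ℝ × ℝ => ((p.1 - p.2.1, p.2.1, Real.exp p.2.2 - 1) : ℝ × ℝ × ℝ)) =
      {q : ℝ × ℝ × ℝ | -1 < q.2.2} ∧
    (∀ θ : ℝ, ((θ - θ, θ, Real.exp (0 : ℝ) - 1) : ℝ × ℝ × ℝ) = (0, θ, 0)) ∧
    (fun p : ℝ × ℝ × ℝ => ((p.1 - p.2.1, p.2.1, Real.exp p.2.2 - 1) : ℝ × ℝ × ℝ)) ''
        {p : ℝ × ℝ × ℝ | ∃ θ : ℝ, p = (θ, θ, 0)} =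
      {q : ℝ × ℝ × ℝ | ∃ x : ℝ, q = (0, x, 0)} := by
  refine ⟨?_, ?_, ?_, ?_, ?_⟩
  · intro p u
    rw [(hasFDerivF p).fderiv]
    simp [betaForm, gammaForm]
    ring
  · intro a b h
    simp only [Prod.mk.injEq] at h
    obtain ⟨h1, h2, h3⟩ := h
    have h3' : a.2.2 = b.2.2 := Real.exp_injective (by linarith)
    have h1' : a.1 = b.1 := by linarith
    exact Prod.ext h1' (Prod.ext h2 h3')
  · ext q
    simp only [Set.mem_range, Set.mem_setOf_eq]
    constructor
    · rintro ⟨p, rfl⟩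
      simpa using Real.exp_pos p.2.2
    · intro h
      refine ⟨(q.1 + q.2.1, q.2.1, Real.log (q.2.2 + 1)), ?_⟩
      have : Real.exp (Real.log (q.2.2 + 1)) = q.2.2 + 1 := Real.exp_log (by linarith)
      simp [this]
  · intro θ; simp
  · ext q
    simp only [Set.mem_image, Set.mem_setOf_eq]
    constructor
    · rintro ⟨p, ⟨θ, rfl⟩, rfl⟩
      exact ⟨θ, by simp⟩
    · rintro ⟨x, rfl⟩
      exact ⟨(x, x, 0), ⟨x, rfl⟩, by simp⟩
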